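/- Fix n ≥ 1, an integer k with 1 ≤ k < n, θ ∈ ℝ, σ > 0, ξ > 0, η > 0 and a scaling factor α > 0. Let Z be a real random variable with Gaussian law N(θ, σ²ξ²/n), let S be independent of Z with density ρ_{n−k}, and let θ̃_H = Z·1(|Z| > σSξη) be the feasible hard-thresholding estimator. Then for every x ∈ ℝ, P(σ^{−1}α(θ̃_H − θ) ≤ x) = Φ(n^{1/2} x/(α ξ))·∫_0^∞ 1(|x/α + θ/σ| > ξ s η) ρ_{n−k}(s) ds + ∫_0^∞ Φ(n^{1/2}(−θ/(σξ) + s η))·1(0 ≤ x/α + θ/σ ≤ ξ s η) ρ_{n−k}(s) ds + ∫_0^∞ Φ(n^{1/2}(−θ/(σξ) − s η))·1(−ξ s η ≤ x/α + θ/σ < 0) ρ_{n−k}(s) ds. -/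

import Mathlib

open MeasureTheory ProbabilityTheory Filter Set NNReal

/-- Standard normal cdf. -/
noncomputable def Phi (x : ℝ) : ℝ :=
  ∫ t in Iic x, (Real.sqrt (2 * Real.pi))⁻¹ * Real.exp (-t ^ 2 / 2)

/-- Standard normal pdf. -/
noncomputable def stdPhi (t : ℝ) : ℝ :=
  (Real.sqrt (2 * Real.pi))⁻¹ * Real.exp (-t ^ 2 / 2)

/-- Extension of `Phi` to the extended reals, with `PhiE ⊤ = 1` and `PhiE ⊥ = 0`. -/
noncomputable def PhiE (z : EReal) : ℝ :=
  if z = ⊤ then 1 else if z = ⊥ then 0 else Phi z.toReal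

/-- Density of `m^{-1/2}` times the square root of a chi-square with `m` degrees of freedom. -/
noncomputable def rho (m : ℕ) (s : ℝ) : ℝ :=
  if 0 < s then
    (2 : ℝ) ^ ((1 : ℝ) - (m : ℝ) / 2) * (Real.Gamma ((m : ℝ) / 2))⁻¹ * Real.sqrt m *
      ((m : ℝ) * s ^ 2) ^ (((m : ℝ) - 1) / 2) * Real.exp (-(m : ℝ) * s ^ 2 / 2)
  else 0

/-- Joint law of the least-squares coordinate `Z ~ N(θ, σ²ξ²/n)` and the independent
variance-estimator ratio `S` with density `rho m`. -/
noncomputable def jointMeas (n m : ℕ) (ξ θ σ : ℝ) : Measure (ℝ × ℝ) :=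
  (gaussianReal θ (Real.toNNReal (σ ^ 2 * ξ ^ 2 / n))).prod
    (volume.withDensity fun s => ENNReal.ofReal (rho m s))

/-- Feasible hard-thresholding estimator `Z · 1(|Z| > σSξη)`. -/
noncomputable def hardF (σ ξ η : ℝ) (p : ℝ × ℝ) : ℝ :=
  if σ * p.2 * ξ * η < |p.1| then p.1 else 0

/-- Feasible soft-thresholding estimator `sign(Z)(|Z| − σSξη)₊`. -/
noncomputable def softF (σ ξ η : ℝ) (p : ℝ × ℝ) : ℝ :=
  Real.sign p.1 * max (|p.1| - σ * p.2 * ξ * η) 0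

/-- Feasible adaptive soft-thresholding estimator `Z(1 − σ²S²ξ²η²/Z²)₊`. -/
noncomputable def adaptF (σ ξ η : ℝ) (p : ℝ × ℝ) : ℝ :=
  if p.1 = 0 then 0 else p.1 * max (1 - (σ * p.2 * ξ * η) ^ 2 / p.1 ^ 2) 0

lemma phi_eq_pdf : (fun t : ℝ => (Real.sqrt (2 * Real.pi))⁻¹ * Real.exp (-t ^ 2 / 2))
    = gaussianPDFReal 0 1 := by
  ext t
  simp [gaussianPDFReal]

lemma Phi_eq_setInt (y : ℝ) : Phi y = ∫ t in Iic y, gaussianPDFReal 0 1 t := by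
  rw [Phi]; rw [phi_eq_pdf]

lemma Phi_nonneg (y : ℝ) : 0 ≤ Phi y := by
  rw [Phi_eq_setInt]
  exact setIntegral_nonneg measurableSet_Iic fun t _ => gaussianPDFReal_nonneg _ _ _

lemma Phi_le_one (y : ℝ) : Phi y ≤ 1 := by
  rw [Phi_eq_setInt]
  calc ∫ t in Iic y, gaussianPDFReal 0 1 t ≤ ∫ t, gaussianPDFReal 0 1 t := by
        apply setIntegral_le_integral (integrable_gaussianPDFReal 0 1)
        exact Filter.Eventually.of_forall fun t => gaussianPDFReal_nonneg _ _ _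
    _ = 1 := integral_gaussianPDFReal_eq_one 0 one_ne_zero

lemma Phi_mono : Monotone Phi := by
  intro a b hab
  rw [Phi_eq_setInt, Phi_eq_setInt]
  apply setIntegral_mono_set (integrable_gaussianPDFReal 0 1).integrableOn
    (Filter.Eventually.of_forall fun t => gaussianPDFReal_nonneg _ _ _)
  exact HasSubset.Subset.eventuallyLE (Iic_subset_Iic.mpr hab)

lemma gaussStd_Iic (y : ℝ) : gaussianReal 0 1 (Iic y) = ENNReal.ofReal (Phi y) := by
  rw [gaussianReal_apply_eq_integral 0 one_ne_zero, Phi_eq_setInt]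

lemma gauss_Iic (m : ℝ) (v : ℝ≥0) (hv : 0 < (v : ℝ)) (a : ℝ) :
    gaussianReal m v (Iic a) = ENNReal.ofReal (Phi ((a - m) / Real.sqrt v)) := by
  have hd : (0 : ℝ) < Real.sqrt v := Real.sqrt_pos.mpr hv
  have h1 : (gaussianReal (0:ℝ) 1).map (fun x => (Real.sqrt v) * x) = gaussianReal 0 v := by
    rw [show (fun x => (Real.sqrt v : ℝ) * x) = ((Real.sqrt v : ℝ) * ·) from rfl,
      gaussianReal_map_const_mul]
    congr 1
    · ring
    · ext
      simp [Real.sq_sqrt hv.le]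
  have h2 : (gaussianReal (0:ℝ) v).map (· + m) = gaussianReal m v := by
    rw [gaussianReal_map_add_const]; norm_num
  have hmap : gaussianReal m v = (gaussianReal 0 1).map (fun x => Real.sqrt v * x + m) := by
    rw [← h2, ← h1, Measure.map_map (measurable_id'.add_const m)
      (measurable_id'.const_mul _)]
    rfl
  have hpre : (fun x => Real.sqrt v * x + m) ⁻¹' (Iic a) = Iic ((a - m) / Real.sqrt v) := by
    ext z
    simp only [mem_preimage, mem_Iic]
    rw [le_div_iff₀ hd]
    constructor <;> intro h <;> nlinarith
  rw [hmap, Measure.map_apply (by fun_prop) measurableSet_Iic, hpre, gaussStd_Iic]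

lemma rho_nonneg (m : ℕ) (hm : 1 ≤ m) (s : ℝ) : 0 ≤ rho m s := by
  rw [rho]
  split_ifs with h
  · have hΓ : 0 < Real.Gamma ((m : ℝ) / 2) := by
      apply Real.Gamma_pos_of_pos
      positivity
    positivity
  · exact le_refl _

lemma rho_measurable (m : ℕ) : Measurable (rho m) := by
  apply Measurable.ite (measurableSet_lt measurable_const measurable_id) <;> fun_prop

lemma rho_zero_of_nonpos (m : ℕ) {s : ℝ} (hs : s ≤ 0) : rho m s = 0 := by
  rw [rho, if_neg (not_lt.mpr hs)]

lemma rho_integrableOn (m : ℕ) (hm : 1 ≤ m) : IntegrableOn (rho m) (Ioi 0) := by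
  have hb : (0:ℝ) < (m : ℝ) / 2 := by positivity
  have hs : (-1 : ℝ) < (m : ℝ) - 1 := by
    have : (1:ℝ) ≤ (m:ℝ) := by exact_mod_cast hm
    linarith
  have base := (integrableOn_rpow_mul_exp_neg_mul_sq hb hs).const_mul
    ((2 : ℝ) ^ ((1 : ℝ) - (m : ℝ) / 2) * (Real.Gamma ((m : ℝ) / 2))⁻¹ * Real.sqrt m *
      (m : ℝ) ^ (((m : ℝ) - 1) / 2))
  apply IntegrableOn.congr_fun base _ measurableSet_Ioi
  intro s hs'
  have hs0 : (0:ℝ) < s := hs'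
  rw [rho, if_pos hs0]
  have h1 : ((m : ℝ) * s ^ 2) ^ (((m : ℝ) - 1) / 2)
      = (m : ℝ) ^ (((m : ℝ) - 1) / 2) * s ^ ((m : ℝ) - 1) := by
    rw [Real.mul_rpow (by positivity) (by positivity)]
    congr 1
    rw [← Real.rpow_natCast s 2, ← Real.rpow_mul hs0.le]
    congr 1
    ring
  have h2 : Real.exp (-(m : ℝ) * s ^ 2 / 2) = Real.exp (-((m:ℝ)/2) * s ^ 2) := by
    ring_nf
  rw [h1, h2]
  ring

/-- finite-sample cdf of the scaled and centered feasible
hard-thresholding estimator. -/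
theorem stmt_14 (n k : ℕ) (hk : 1 ≤ k) (hkn : k < n) (θ σ ξ η α : ℝ)
    (hσ : 0 < σ) (hξ : 0 < ξ) (hη : 0 < η) (hα : 0 < α) (x : ℝ) :
    (jointMeas n (n - k) ξ θ σ
        {p : ℝ × ℝ | σ⁻¹ * α * (hardF σ ξ η p - θ) ≤ x}).toReal =
      Phi (Real.sqrt n * x / (α * ξ)) *
          (∫ s in Ioi (0 : ℝ),
            (if ξ * s * η < |x / α + θ / σ| then 1 else 0) * rho (n - k) s)
        + (∫ s in Ioi (0 : ℝ), Phi (Real.sqrt n * (-θ / (σ * ξ) + s * η)) *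
            (if 0 ≤ x / α + θ / σ ∧ x / α + θ / σ ≤ ξ * s * η then 1 else 0) * rho (n - k) s)
        + (∫ s in Ioi (0 : ℝ), Phi (Real.sqrt n * (-θ / (σ * ξ) - s * η)) *
            (if -(ξ * s * η) ≤ x / α + θ / σ ∧ x / α + θ / σ < 0 then 1 else 0)
              * rho (n - k) s) := by
  set m := n - k with hmdef
  have hm : 1 ≤ m := by omega
  have hn : 0 < n := by omega
  have hnR : (0:ℝ) < (n:ℝ) := by exact_mod_cast hn
  have hsn : (0:ℝ) < Real.sqrt n := Real.sqrt_pos.mpr hnR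
  set c : ℝ := x / α + θ / σ with hcdef
  set v : ℝ≥0 := Real.toNNReal (σ ^ 2 * ξ ^ 2 / n) with hvdef
  have hvr : (v : ℝ) = σ ^ 2 * ξ ^ 2 / n := Real.coe_toNNReal _ (by positivity)
  have hvpos : 0 < (v : ℝ) := by rw [hvr]; positivity
  have hv0 : v ≠ 0 := by
    intro h
    rw [h] at hvpos
    simp at hvpos
  have hsqv : Real.sqrt v = σ * ξ / Real.sqrt n := by
    rw [hvr, show σ ^ 2 * ξ ^ 2 / (n:ℝ) = (σ * ξ / Real.sqrt n) ^ 2 by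
      rw [div_pow, mul_pow, Real.sq_sqrt hnR.le]]
    exact Real.sqrt_sq (by positivity)
  -- rewrite the event
  have hσc : σ * c = σ * x / α + θ := by
    rw [hcdef]; field_simp
  have hset : {p : ℝ × ℝ | σ⁻¹ * α * (hardF σ ξ η p - θ) ≤ x}
      = {p : ℝ × ℝ | hardF σ ξ η p ≤ σ * c} := by
    ext p
    simp only [mem_setOf_eq]
    rw [hσc, mul_assoc, inv_mul_le_iff₀ hσ, mul_comm α, ← le_div_iff₀ hα,
      sub_le_iff_le_add, mul_div_assoc]
  -- measurability of the event
  have hhard : Measurable (hardF σ ξ η) := by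
    unfold hardF
    exact Measurable.ite
      (measurableSet_lt (by fun_prop) (by fun_prop)) (by fun_prop) (by fun_prop)
  have hA : MeasurableSet {p : ℝ × ℝ | hardF σ ξ η p ≤ σ * c} :=
    hhard measurableSet_Iic
  -- the slice computation
  have hslice : ∀ s : ℝ, 0 < s →
      gaussianReal θ v ((fun z => (z, s)) ⁻¹' {p : ℝ × ℝ | hardF σ ξ η p ≤ σ * c})
        = ENNReal.ofReal (if ξ * s * η < |c| then Phi (Real.sqrt n * x / (α * ξ))
            else if 0 ≤ c then Phi (Real.sqrt n * (-θ / (σ * ξ) + s * η))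
            else Phi (Real.sqrt n * (-θ / (σ * ξ) - s * η))) := by
    intro s hs
    have hT : (0:ℝ) < σ * s * ξ * η := by positivity
    by_cases h1 : ξ * s * η < |c|
    · rw [if_pos h1]
      have hEs : ((fun z => (z, s)) ⁻¹' {p : ℝ × ℝ | hardF σ ξ η p ≤ σ * c}) = Iic (σ * c) := by
        ext z
        simp only [mem_preimage, mem_setOf_eq, hardF, mem_Iic]
        split_ifs with hz
        · rfl
        · push_neg at hz
          have hz' := abs_le.mp hz
          rcases lt_abs.mp h1 with hc | hc
          · constructor <;> intro _ <;>
              linarith [hz'.1, hz'.2, mul_lt_mul_of_pos_left hc hσ, hT]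
          · constructor <;> intro h' <;>
              linarith [hz'.1, hz'.2, mul_lt_mul_of_pos_left hc hσ, hT]
      have harg : (σ * c - θ) / Real.sqrt v = Real.sqrt n * x / (α * ξ) := by
        rw [hsqv, hcdef]; field_simp; ring
      rw [hEs, gauss_Iic θ v hvpos, harg]
    · rw [if_neg h1]
      push_neg at h1
      have hc' := abs_le.mp h1
      by_cases h2 : 0 ≤ c
      · rw [if_pos h2]
        have hEs : ((fun z => (z, s)) ⁻¹' {p : ℝ × ℝ | hardF σ ξ η p ≤ σ * c})
            = Iic (σ * s * ξ * η) := by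
          ext z
          simp only [mem_preimage, mem_setOf_eq, hardF, mem_Iic]
          split_ifs with hz
          · rcases lt_abs.mp hz with hzz | hzz
            · constructor <;> intro h' <;>
                linarith [hc'.1, hc'.2, mul_le_mul_of_nonneg_left hc'.2 hσ.le,
                  mul_nonneg hσ.le h2, hT]
            · constructor <;> intro h' <;>
                linarith [hc'.1, hc'.2, mul_le_mul_of_nonneg_left hc'.2 hσ.le,
                  mul_nonneg hσ.le h2, hT]
          · push_neg at hz
            have hz' := abs_le.mp hz
            constructor <;> intro _ <;> linarith [hz'.1, hz'.2, mul_nonneg hσ.le h2]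
        have harg : (σ * s * ξ * η - θ) / Real.sqrt v
            = Real.sqrt n * (-θ / (σ * ξ) + s * η) := by
          rw [hsqv]; field_simp; ring
        rw [hEs, gauss_Iic θ v hvpos, harg]
      · rw [if_neg h2]
        push_neg at h2
        have hEs : ((fun z => (z, s)) ⁻¹' {p : ℝ × ℝ | hardF σ ξ η p ≤ σ * c})
            = Iio (-(σ * s * ξ * η)) := by
          ext z
          simp only [mem_preimage, mem_setOf_eq, hardF, mem_Iio]
          split_ifs with hz
          · rcases lt_abs.mp hz with hzz | hzz
            · constructor <;> intro h' <;>
                linarith [hc'.1, hc'.2, mul_neg_of_pos_of_neg hσ h2,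
                  mul_le_mul_of_nonneg_left hc'.1 hσ.le, hT]
            · constructor <;> intro h' <;>
                linarith [hc'.1, hc'.2, mul_neg_of_pos_of_neg hσ h2,
                  mul_le_mul_of_nonneg_left hc'.1 hσ.le, hT]
          · push_neg at hz
            have hz' := abs_le.mp hz
            constructor <;> intro h' <;>
              linarith [hz'.1, hz'.2, mul_neg_of_pos_of_neg hσ h2, hT]
        have hsing : gaussianReal θ v {-(σ * s * ξ * η)} = 0 :=
          gaussianReal_absolutelyContinuous θ hv0 (measure_singleton _)
        have harg : (-(σ * s * ξ * η) - θ) / Real.sqrt v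
            = Real.sqrt n * (-θ / (σ * ξ) - s * η) := by
          rw [hsqv]; field_simp; ring
        rw [hEs, measure_congr (Iio_ae_eq_Iic' hsing), gauss_Iic θ v hvpos, harg]
  -- measurability helpers
  have hrhoM : Measurable fun s : ℝ => ENNReal.ofReal (rho m s) :=
    (rho_measurable m).ennreal_ofReal
  have hslM : Measurable fun s : ℝ =>
      gaussianReal θ v ((fun z => (z, s)) ⁻¹' {p : ℝ × ℝ | hardF σ ξ η p ≤ σ * c}) :=
    measurable_measure_prodMk_right hA
  have hind_nonneg : ∀ (P : Prop) [Decidable P], (0:ℝ) ≤ if P then 1 else 0 := by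
    intro P _; split_ifs <;> norm_num
  have hind_le_one : ∀ (P : Prop) [Decidable P], (if P then (1:ℝ) else 0) ≤ 1 := by
    intro P _; split_ifs <;> norm_num
  -- the three integrand functions
  set f₁ : ℝ → ℝ := fun s => (if ξ * s * η < |c| then (1:ℝ) else 0) * rho m s with hf₁
  set f₂ : ℝ → ℝ := fun s => Phi (Real.sqrt n * (-θ / (σ * ξ) + s * η)) *
      (if 0 ≤ c ∧ c ≤ ξ * s * η then (1:ℝ) else 0) * rho m s with hf₂
  set f₃ : ℝ → ℝ := fun s => Phi (Real.sqrt n * (-θ / (σ * ξ) - s * η)) *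
      (if -(ξ * s * η) ≤ c ∧ c < 0 then (1:ℝ) else 0) * rho m s with hf₃
  set G : ℝ → ℝ := fun s => Phi (Real.sqrt n * x / (α * ξ)) * f₁ s + f₂ s + f₃ s with hG
  -- pointwise identity on Ioi 0
  have hpt : ∀ s : ℝ, 0 < s →
      ENNReal.ofReal (rho m s) *
        gaussianReal θ v ((fun z => (z, s)) ⁻¹' {p : ℝ × ℝ | hardF σ ξ η p ≤ σ * c})
      = ENNReal.ofReal (G s) := by
    intro s hs
    rw [hslice s hs, ← ENNReal.ofReal_mul (rho_nonneg m hm s)]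
    congr 1
    rw [hG, hf₁, hf₂, hf₃]
    simp only
    by_cases h1 : ξ * s * η < |c|
    · have e2 : ¬(0 ≤ c ∧ c ≤ ξ * s * η) := by
        rintro ⟨ha, hb⟩
        rw [abs_of_nonneg ha] at h1
        linarith
      have e3 : ¬(-(ξ * s * η) ≤ c ∧ c < 0) := by
        rintro ⟨ha, hb⟩
        rw [abs_of_neg hb] at h1
        linarith
      simp only [if_pos h1, if_neg e2, if_neg e3]
      ring
    · push_neg at h1
      have e1 : ¬(ξ * s * η < |c|) := not_lt.mpr h1
      by_cases h2 : 0 ≤ c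
      · have e2 : 0 ≤ c ∧ c ≤ ξ * s * η := ⟨h2, le_trans (le_abs_self c) h1⟩
        have e3 : ¬(-(ξ * s * η) ≤ c ∧ c < 0) := by
          rintro ⟨_, hb⟩
          exact absurd h2 (not_le.mpr hb)
        simp only [if_neg e1, if_pos e2, if_neg e3, if_pos h2]
        ring
      · push_neg at h2
        have e2 : ¬(0 ≤ c ∧ c ≤ ξ * s * η) := by
          rintro ⟨ha, _⟩
          exact absurd ha (not_le.mpr h2)
        have e3 : -(ξ * s * η) ≤ c ∧ c < 0 := ⟨by linarith [neg_abs_le c], h2⟩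
        simp only [if_neg e1, if_neg e2, if_pos e3, if_neg (not_le.mpr h2)]
        ring
  -- the measure as a set lintegral over Ioi 0
  have hmain : jointMeas n m ξ θ σ {p : ℝ × ℝ | σ⁻¹ * α * (hardF σ ξ η p - θ) ≤ x}
      = ∫⁻ s in Ioi (0:ℝ), ENNReal.ofReal (G s) := by
    rw [hset]
    simp only [jointMeas]
    rw [← hvdef, Measure.prod_apply_symm hA,
      lintegral_withDensity_eq_lintegral_mul volume hrhoM hslM]
    rw [← lintegral_add_compl _ (measurableSet_Ioi (a := (0:ℝ)))]
    have hcompl : (∫⁻ s in (Ioi (0:ℝ))ᶜ, (((fun s : ℝ => ENNReal.ofReal (rho m s)) *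
        fun s : ℝ => gaussianReal θ v
          ((fun z => (z, s)) ⁻¹' {p : ℝ × ℝ | hardF σ ξ η p ≤ σ * c})) s)) = 0 := by
      rw [compl_Ioi]
      have hz : ∀ u ∈ Iic (0:ℝ), (((fun s : ℝ => ENNReal.ofReal (rho m s)) *
          fun s : ℝ => gaussianReal θ v
            ((fun z => (z, s)) ⁻¹' {p : ℝ × ℝ | hardF σ ξ η p ≤ σ * c})) u)
          = (fun _ : ℝ => (0 : ENNReal)) u := by
        intro u hu
        simp [rho_zero_of_nonpos m (mem_Iic.mp hu)]
      rw [setLIntegral_congr_fun measurableSet_Iic hz]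
      simp
    rw [hcompl, add_zero]
    exact setLIntegral_congr_fun measurableSet_Ioi
      (fun s hs => hpt s (mem_Ioi.mp hs))
  -- integrability
  have hrhoInt := rho_integrableOn m hm
  have hf₁M : Measurable f₁ := by
    apply Measurable.mul _ (rho_measurable m)
    exact Measurable.ite (measurableSet_lt (by fun_prop) measurable_const)
      measurable_const measurable_const
  have hf₂M : Measurable f₂ := by
    apply Measurable.mul _ (rho_measurable m)
    apply Measurable.mul
      (Phi_mono.measurable.comp
        (by fun_prop : Measurable fun s : ℝ => Real.sqrt n * (-θ / (σ * ξ) + s * η)))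
    refine Measurable.ite ?_ measurable_const measurable_const
    by_cases hc0 : 0 ≤ c
    · have : {s : ℝ | 0 ≤ c ∧ c ≤ ξ * s * η} = {s : ℝ | c ≤ ξ * s * η} := by
        ext t; simp [hc0]
      rw [this]
      exact measurableSet_le measurable_const (by fun_prop)
    · have : {s : ℝ | 0 ≤ c ∧ c ≤ ξ * s * η} = ∅ := by
        ext t; simp [hc0]
      rw [this]
      exact MeasurableSet.empty
  have hf₃M : Measurable f₃ := by
    apply Measurable.mul _ (rho_measurable m)
    apply Measurable.mul
      (Phi_mono.measurable.comp
        (by fun_prop : Measurable fun s : ℝ => Real.sqrt n * (-θ / (σ * ξ) - s * η)))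
    refine Measurable.ite ?_ measurable_const measurable_const
    by_cases hc0 : c < 0
    · have : {s : ℝ | -(ξ * s * η) ≤ c ∧ c < 0} = {s : ℝ | -(ξ * s * η) ≤ c} := by
        ext t; simp [hc0]
      rw [this]
      exact measurableSet_le (by fun_prop) measurable_const
    · have : {s : ℝ | -(ξ * s * η) ≤ c ∧ c < 0} = ∅ := by
        ext t; simp [hc0]
      rw [this]
      exact MeasurableSet.empty
  have hint₁ : IntegrableOn f₁ (Ioi (0:ℝ)) := by
    refine Integrable.mono hrhoInt hf₁M.aestronglyMeasurable.restrict (ae_of_all _ fun s => ?_)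
    rw [hf₁]; simp only [Real.norm_eq_abs]
    split_ifs with h
    · rw [one_mul]
    · simp [abs_nonneg]
  have hint₂ : IntegrableOn f₂ (Ioi (0:ℝ)) := by
    refine Integrable.mono hrhoInt hf₂M.aestronglyMeasurable.restrict (ae_of_all _ fun s => ?_)
    rw [hf₂]; simp only [Real.norm_eq_abs]
    rw [abs_mul, abs_mul, abs_of_nonneg (Phi_nonneg _),
      abs_of_nonneg (hind_nonneg _)]
    calc Phi _ * (if 0 ≤ c ∧ c ≤ ξ * s * η then (1:ℝ) else 0) * |rho m s|
        ≤ 1 * 1 * |rho m s| := by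
          apply mul_le_mul_of_nonneg_right _ (abs_nonneg _)
          apply mul_le_mul (Phi_le_one _) (hind_le_one _) (hind_nonneg _) zero_le_one
      _ = |rho m s| := by ring
  have hint₃ : IntegrableOn f₃ (Ioi (0:ℝ)) := by
    refine Integrable.mono hrhoInt hf₃M.aestronglyMeasurable.restrict (ae_of_all _ fun s => ?_)
    rw [hf₃]; simp only [Real.norm_eq_abs]
    rw [abs_mul, abs_mul, abs_of_nonneg (Phi_nonneg _),
      abs_of_nonneg (hind_nonneg _)]
    calc Phi _ * (if -(ξ * s * η) ≤ c ∧ c < 0 then (1:ℝ) else 0) * |rho m s|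
        ≤ 1 * 1 * |rho m s| := by
          apply mul_le_mul_of_nonneg_right _ (abs_nonneg _)
          apply mul_le_mul (Phi_le_one _) (hind_le_one _) (hind_nonneg _) zero_le_one
      _ = |rho m s| := by ring
  have hGnn : ∀ s : ℝ, 0 ≤ G s := by
    intro s
    rw [hG, hf₁, hf₂, hf₃]
    simp only
    have h0 := rho_nonneg m hm s
    apply add_nonneg
    apply add_nonneg
    · exact mul_nonneg (Phi_nonneg _) (mul_nonneg (hind_nonneg _) h0)
    · exact mul_nonneg (mul_nonneg (Phi_nonneg _) (hind_nonneg _)) h0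
    · exact mul_nonneg (mul_nonneg (Phi_nonneg _) (hind_nonneg _)) h0
  have hGint : IntegrableOn G (Ioi (0:ℝ)) :=
    ((hint₁.const_mul _).add hint₂).add hint₃
  -- final computation
  rw [hmain, ← ofReal_integral_eq_lintegral_ofReal hGint (ae_of_all _ hGnn),
    ENNReal.toReal_ofReal (integral_nonneg hGnn)]
  have hI1 : Integrable (fun a => Phi (Real.sqrt n * x / (α * ξ)) * f₁ a)
      (volume.restrict (Ioi (0:ℝ))) := hint₁.const_mul _
  have hI12 : Integrable (fun a => Phi (Real.sqrt n * x / (α * ξ)) * f₁ a + f₂ a)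
      (volume.restrict (Ioi (0:ℝ))) := hI1.add hint₂
  rw [hG]
  simp only
  rw [integral_add hI12 hint₃, integral_add hI1 hint₂, integral_const_mul]
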